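/- For every positive integer l and every real T > 0 with e^{-T²/2} truncation level, one has 2·∫_{√(2 log(π(l/2+1/2))/(π(l²-1)))}^∞ e^{-π(l²-1)x²} dx ≤ 4/(π^{5/2}·(l+1)²·√(l²-1)), provided l ≥ 2. -/

import Mathlib

open Real MeasureTheory

lemma tail_integral (c a : ℝ) (hc : 0 < c) :
    ∫ x in Set.Ioi a, x * Real.exp (-c * x ^ 2) = Real.exp (-c * a ^ 2) / (2 * c) := by
  have hderiv : ∀ x : ℝ, HasDerivAt (fun x : ℝ => -(2 * c)⁻¹ * Real.exp (-c * x ^ 2))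
      (x * Real.exp (-c * x ^ 2)) x := by
    intro x
    convert ((hasDerivAt_pow 2 x).const_mul (-c)).exp.const_mul (-(2 * c)⁻¹) using 1
    · rfl
    · rfl
    field_simp
    ring
  have hint : IntegrableOn (fun x : ℝ => x * Real.exp (-c * x ^ 2)) (Set.Ioi a) :=
    (integrable_mul_exp_neg_mul_sq hc).integrableOn
  have htend : Filter.Tendsto (fun x : ℝ => -(2 * c)⁻¹ * Real.exp (-c * x ^ 2))
      Filter.atTop (nhds 0) := by
    rw [show (0 : ℝ) = -(2 * c)⁻¹ * 0 by ring]
    apply Filter.Tendsto.const_mul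
    have h1 : Filter.Tendsto (fun x : ℝ => c * x ^ 2) Filter.atTop Filter.atTop :=
      (Filter.tendsto_pow_atTop (by norm_num)).const_mul_atTop hc
    simp only [neg_mul]
    exact Real.tendsto_exp_atBot.comp (Filter.tendsto_neg_atTop_atBot.comp h1)
  have := MeasureTheory.integral_Ioi_of_hasDerivAt_of_tendsto'
    (fun x _ => hderiv x) hint htend
  rw [this]
  field_simp
  ring

theorem stmt6 (l : ℕ) (hl : 2 ≤ l) :
    2 * ∫ x in Set.Ioi
        (Real.sqrt (2 * Real.log (π * ((l : ℝ) / 2 + 1 / 2)) / (π * ((l : ℝ) ^ 2 - 1)))),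
        Real.exp (-π * ((l : ℝ) ^ 2 - 1) * x ^ 2) ≤
      4 / (π ^ ((5 : ℝ) / 2) * ((l : ℝ) + 1) ^ 2 * Real.sqrt ((l : ℝ) ^ 2 - 1)) := by
  have hl2 : (2 : ℝ) ≤ (l : ℝ) := by exact_mod_cast hl
  have hl1 : (3 : ℝ) ≤ (l : ℝ) ^ 2 - 1 := by nlinarith
  have hpi := Real.pi_pos
  set c : ℝ := π * ((l : ℝ) ^ 2 - 1) with hc_def
  have hc : 0 < c := mul_pos Real.pi_pos (by linarith)
  set X : ℝ := π * ((l : ℝ) / 2 + 1 / 2) with hX_def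
  have hX : 0 < X := mul_pos Real.pi_pos (by linarith)
  have hX2 : (2 : ℝ) ≤ X := by
    have h3 := Real.pi_gt_three
    have : (3 : ℝ) / 2 ≤ (l : ℝ) / 2 + 1 / 2 := by linarith
    nlinarith
  have hlog : 1 ≤ 2 * Real.log X := by
    have h2 : Real.exp (1 / 2) ≤ 2 := by
      have he : Real.exp 1 < 2.7182818286 := Real.exp_one_lt_d9
      have h : Real.exp (1 / 2) * Real.exp (1 / 2) = Real.exp 1 := by
        rw [← Real.exp_add]; norm_num
      nlinarith [Real.exp_pos ((1 : ℝ) / 2)]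
    have : (1 : ℝ) / 2 ≤ Real.log X := (Real.le_log_iff_exp_le hX).2 (le_trans h2 hX2)
    linarith
  set a : ℝ := Real.sqrt (2 * Real.log X / c) with ha_def
  have hnum : 0 ≤ 2 * Real.log X / c := div_nonneg (by linarith) hc.le
  have ha2 : a ^ 2 = 2 * Real.log X / c := Real.sq_sqrt hnum
  have ha0 : 0 ≤ a := Real.sqrt_nonneg _
  have hca2 : c * a ^ 2 = 2 * Real.log X := by
    rw [ha2]; field_simp
  have hsc : Real.sqrt c * Real.sqrt c = c := Real.mul_self_sqrt hc.le
  have hsc0 : 0 < Real.sqrt c := Real.sqrt_pos.2 hc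
  have hkey : 1 ≤ a * Real.sqrt c := by
    have h1 : (a * Real.sqrt c) ^ 2 = 2 * Real.log X := by
      rw [mul_pow, Real.sq_sqrt hc.le, ha2]; field_simp
    nlinarith [mul_nonneg ha0 hsc0.le]
  have hint1 : IntegrableOn (fun x : ℝ => Real.exp (-c * x ^ 2)) (Set.Ioi a) :=
    (integrable_exp_neg_mul_sq hc).integrableOn
  have hint2 : IntegrableOn (fun x : ℝ => Real.sqrt c * (x * Real.exp (-c * x ^ 2)))
      (Set.Ioi a) := ((integrable_mul_exp_neg_mul_sq hc).const_mul _).integrableOn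
  have hmono : ∫ x in Set.Ioi a, Real.exp (-c * x ^ 2) ≤
      ∫ x in Set.Ioi a, Real.sqrt c * (x * Real.exp (-c * x ^ 2)) := by
    apply setIntegral_mono_on hint1 hint2 measurableSet_Ioi
    intro x hx
    have hxa : a ≤ x := le_of_lt hx
    have h1 : 1 ≤ Real.sqrt c * x := by
      calc (1 : ℝ) ≤ a * Real.sqrt c := hkey
        _ ≤ Real.sqrt c * x := by rw [mul_comm]; exact mul_le_mul_of_nonneg_left hxa hsc0.le
    nlinarith [Real.exp_pos (-c * x ^ 2)]
  have hval : ∫ x in Set.Ioi a, Real.sqrt c * (x * Real.exp (-c * x ^ 2)) =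
      Real.sqrt c * (Real.exp (-c * a ^ 2) / (2 * c)) := by
    rw [MeasureTheory.integral_const_mul, tail_integral c a hc]
  have hexp : Real.exp (-c * a ^ 2) = 1 / X ^ 2 := by
    rw [show -c * a ^ 2 = -(2 * Real.log X) by rw [neg_mul, hca2], Real.exp_neg,
      show (2 : ℝ) * Real.log X = Real.log X + Real.log X by ring, Real.exp_add,
      Real.exp_log hX, one_div, pow_two]
  have hub : 2 * (Real.sqrt c * (Real.exp (-c * a ^ 2) / (2 * c))) =
      (1 / X ^ 2) / Real.sqrt c := by
    rw [hexp]
    field_simp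
    nlinarith [hsc, sq_nonneg X]
  have hsqc : Real.sqrt c = Real.sqrt π * Real.sqrt ((l : ℝ) ^ 2 - 1) :=
    Real.sqrt_mul Real.pi_pos.le _
  have hrpow : π ^ ((5 : ℝ) / 2) = π ^ 2 * Real.sqrt π := by
    rw [show (5 : ℝ) / 2 = 2 + 1 / 2 by norm_num, Real.rpow_add Real.pi_pos]
    congr 1
    · rw [Real.rpow_two]
    · rw [← Real.sqrt_eq_rpow]
  have hsl0 : 0 < Real.sqrt ((l : ℝ) ^ 2 - 1) := Real.sqrt_pos.2 (by linarith)
  have hsp0 : 0 < Real.sqrt π := Real.sqrt_pos.2 Real.pi_pos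
  have hrhs : (1 / X ^ 2) / Real.sqrt c =
      4 / (π ^ ((5 : ℝ) / 2) * ((l : ℝ) + 1) ^ 2 * Real.sqrt ((l : ℝ) ^ 2 - 1)) := by
    have hD : X ^ 2 * Real.sqrt c =
        π ^ ((5 : ℝ) / 2) * ((l : ℝ) + 1) ^ 2 * Real.sqrt ((l : ℝ) ^ 2 - 1) / 4 := by
      rw [hrpow, hsqc, hX_def]; ring
    rw [div_div, hD, one_div_div]
  have hintg : (fun x : ℝ => Real.exp (-π * ((l : ℝ) ^ 2 - 1) * x ^ 2)) =
      fun x : ℝ => Real.exp (-c * x ^ 2) := by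
    funext x; rw [hc_def]; ring_nf
  calc 2 * ∫ x in Set.Ioi a, Real.exp (-π * ((l : ℝ) ^ 2 - 1) * x ^ 2)
      = 2 * ∫ x in Set.Ioi a, Real.exp (-c * x ^ 2) := by rw [hintg]
    _ ≤ 2 * (Real.sqrt c * (Real.exp (-c * a ^ 2) / (2 * c))) := by
        rw [← hval]
        exact mul_le_mul_of_nonneg_left hmono (by norm_num)
    _ = (1 / X ^ 2) / Real.sqrt c := hub
    _ = 4 / (π ^ ((5 : ℝ) / 2) * ((l : ℝ) + 1) ^ 2 * Real.sqrt ((l : ℝ) ^ 2 - 1)) := hrhs
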